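/- Suppose for every x ∈ V the function y ↦ b(x,y)/m(y) is in ℓ²(V,m). Then every u ∈ ℓ²(V,m) satisfies ∑_y b(x,y)|u(y)| < ∞ for all x, and for u ∈ ℓ²(V,m), v ∈ C_c(V), the sums ∑_x u(x) L̃v(x) m(x), ∑_x L̃u(x) v(x) m(x), and (1/2)∑_{x,y} b(x,y)(u(x)−u(y))(v(x)−v(y)) + ∑_x c(x)u(x)v(x) converge absolutely and all coincide. -/

import Mathlib

set_option maxHeartbeats 1000000


/-- The formal Laplacian `L̃u(x) = (1/m(x)) ∑_y b(x,y)(u(x)-u(y)) + (c(x)/m(x))u(x)`. -/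
noncomputable def formalL {V : Type*} (b : V → V → ℝ) (c m : V → ℝ) (u : V → ℝ) (x : V) : ℝ :=
  (1 / m x) * ∑' y, b x y * (u x - u y) + (c x / m x) * u x

/-- **Green's formula.** Suppose `y ↦ b(x,y)/m(y) ∈ ℓ²(V,m)` for all `x`.
Then every `u ∈ ℓ²(V,m)` lies in the formal domain of `L̃`, and for `u ∈ ℓ²(V,m)` and `v`
finitely supported the sums `∑_x u(x) L̃v(x) m(x)`, `∑_x L̃u(x) v(x) m(x)` and
`(1/2)∑_{x,y} b(x,y)(u(x)−u(y))(v(x)−v(y)) + ∑_x c(x)u(x)v(x)` converge absolutely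
and coincide. -/
theorem greens_formula
    (V : Type*) [Countable V] (m : V → ℝ) (hm : ∀ x, 0 < m x)
    (b : V → V → ℝ) (c : V → ℝ)
    (hb_symm : ∀ x y, b x y = b y x) (hb_nonneg : ∀ x y, 0 ≤ b x y)
    (hb_diag : ∀ x, b x x = 0) (hb_sum : ∀ x, Summable fun y => b x y)
    (hc : ∀ x, 0 ≤ c x)
    (hbm : ∀ x : V, Summable fun y => m y * (b x y / m y) ^ 2) :
    (∀ u : V → ℝ, (Summable fun x => m x * u x ^ 2) →
      ∀ x, Summable fun y => b x y * |u y|) ∧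
    (∀ u v : V → ℝ, (Summable fun x => m x * u x ^ 2) → (Function.support v).Finite →
      (Summable fun x => |u x * formalL b c m v x * m x|) ∧
      (Summable fun x => |formalL b c m u x * v x * m x|) ∧
      (Summable fun p : V × V => |b p.1 p.2 * (u p.1 - u p.2) * (v p.1 - v p.2)|) ∧
      (Summable fun x => |c x * u x * v x|) ∧
      (∑' x, u x * formalL b c m v x * m x) = (∑' x, formalL b c m u x * v x * m x) ∧
      (∑' x, u x * formalL b c m v x * m x) =
        (1 / 2) * (∑' p : V × V, b p.1 p.2 * (u p.1 - u p.2) * (v p.1 - v p.2))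
          + ∑' x, c x * u x * v x) := by
  classical
  -- Part 1
  have part1 : ∀ u : V → ℝ, (Summable fun x => m x * u x ^ 2) →
      ∀ x, Summable fun y => b x y * |u y| := by
    intro u hu x
    refine Summable.of_nonneg_of_le
      (fun y => mul_nonneg (hb_nonneg x y) (abs_nonneg _)) (fun y => ?_)
      (((hbm x).add hu).mul_left (1 / 2))
    have hmy' := hm y
    have h3 : 0 ≤ m y * (b x y / m y - |u y|) ^ 2 := mul_nonneg hmy'.le (sq_nonneg _)
    have h4 : b x y * |u y| = m y * (b x y / m y) * |u y| := by
      field_simp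
    nlinarith [h3, h4, sq_abs (u y)]
  refine ⟨part1, ?_⟩
  intro u v hu hv
  set S : Finset V := hv.toFinset with hSdef
  have hvS : ∀ x, x ∉ S → v x = 0 := by
    intro x hx
    by_contra h
    exact hx (hv.mem_toFinset.mpr h)
  -- auxiliary: summability on the product from slice data
  have prodAux : ∀ (φ : V → ℝ) (ψ : V → V → ℝ), (∀ x, 0 ≤ φ x) → (∀ x y, 0 ≤ ψ x y) →
      (∀ x, Summable (ψ x)) → (Summable fun x => φ x * ∑' y, ψ x y) →
      Summable fun p : V × V => φ p.1 * ψ p.1 p.2 := by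
    intro φ ψ hφ hψ h1 h2
    have hnn : 0 ≤ fun p : V × V => φ p.1 * ψ p.1 p.2 := fun p => mul_nonneg (hφ _) (hψ _ _)
    refine (summable_prod_of_nonneg hnn).2 ⟨fun x => (h1 x).mul_left (φ x), ?_⟩
    simpa only [tsum_mul_left] using h2
  -- the four product pieces
  have sA : Summable fun p : V × V => |u p.1 * v p.1| * b p.1 p.2 := by
    refine prodAux (fun x => |u x * v x|) b (fun _ => abs_nonneg _) hb_nonneg hb_sum ?_
    exact summable_of_ne_finset_zero (s := S) fun x hx => by simp [hvS x hx]
  have sB : Summable fun p : V × V => |u p.1| * (b p.1 p.2 * |v p.2|) := by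
    refine prodAux (fun x => |u x|) (fun x y => b x y * |v y|) (fun _ => abs_nonneg _)
      (fun x y => mul_nonneg (hb_nonneg x y) (abs_nonneg _)) ?_ ?_
    · intro x
      exact summable_of_ne_finset_zero (s := S) fun y hy => by simp [hvS y hy]
    · have heq : ∀ x : V, ∑' y, b x y * |v y| = ∑ y ∈ S, b x y * |v y| := by
        intro x
        exact tsum_eq_sum fun y hy => by simp [hvS y hy]
      have : Summable fun x => ∑ y ∈ S, |u x| * (b x y * |v y|) := by
        refine summable_sum fun y _ => ?_
        refine ((part1 u hu y).mul_right (|v y|)).congr fun x => ?_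
        rw [hb_symm y x]; ring
      refine this.congr fun x => ?_
      rw [heq x, Finset.mul_sum]
  have sC : Summable fun p : V × V => |v p.1| * (b p.1 p.2 * |u p.2|) := by
    refine prodAux (fun x => |v x|) (fun x y => b x y * |u y|) (fun _ => abs_nonneg _)
      (fun x y => mul_nonneg (hb_nonneg x y) (abs_nonneg _)) (part1 u hu) ?_
    exact summable_of_ne_finset_zero (s := S) fun x hx => by simp [hvS x hx]
  have sD : Summable fun p : V × V => (1 : ℝ) * (b p.1 p.2 * |u p.2 * v p.2|) := by
    refine prodAux (fun _ => (1 : ℝ)) (fun x y => b x y * |u y * v y|) (fun _ => zero_le_one)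
      (fun x y => mul_nonneg (hb_nonneg x y) (abs_nonneg _)) ?_ ?_
    · intro x
      exact summable_of_ne_finset_zero (s := S) fun y hy => by simp [hvS y hy]
    · have heq : ∀ x : V, ∑' y, b x y * |u y * v y| = ∑ y ∈ S, b x y * |u y * v y| := by
        intro x
        exact tsum_eq_sum fun y hy => by simp [hvS y hy]
      have : Summable fun x => ∑ y ∈ S, b x y * |u y * v y| := by
        refine summable_sum fun y _ => ?_
        refine ((hb_sum y).mul_right (|u y * v y|)).congr fun x => ?_
        rw [hb_symm y x]
      refine (this.congr fun x => ?_)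
      rw [heq x, one_mul]
  -- master bound
  have sG : Summable fun p : V × V => (|u p.1| + |u p.2|) * (|v p.1| + |v p.2|) * b p.1 p.2 := by
    refine ((sA.add sB).add (sC.add sD)).congr fun p => ?_
    simp only [abs_mul]
    ring
  have key : ∀ h : V × V → ℝ,
      (∀ p : V × V, |h p| ≤ (|u p.1| + |u p.2|) * (|v p.1| + |v p.2|) * b p.1 p.2) →
      Summable h := by
    intro h hh
    rw [← summable_abs_iff]
    exact Summable.of_nonneg_of_le (fun p => abs_nonneg _) hh sG
  have mulmul : ∀ (B a1 a2 d1 d2 : ℝ), 0 ≤ B → 0 ≤ a1 → 0 ≤ d1 → a1 ≤ a2 → d1 ≤ d2 →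
      B * a1 * d1 ≤ a2 * d2 * B := by
    intro B a1 a2 d1 d2 hB ha1 hd1 ha hd
    have ha2 : 0 ≤ a2 := ha1.trans ha
    have h1 : B * a1 * d1 ≤ B * a2 * d2 :=
      mul_le_mul (mul_le_mul_of_nonneg_left ha hB) hd hd1 (mul_nonneg hB ha2)
    exact h1.trans_eq (by ring)
  have absSub : ∀ a d : ℝ, |a - d| ≤ |a| + |d| := by
    intro a d
    calc |a - d| = |a + -d| := by rw [sub_eq_add_neg]
    _ ≤ |a| + |-d| := abs_add_le _ _
    _ = |a| + |d| := by rw [abs_neg]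
  -- the various summable pair functions
  have hD : Summable fun p : V × V => b p.1 p.2 * (u p.1 - u p.2) * (v p.1 - v p.2) := by
    refine key _ fun p => ?_
    simp only [abs_mul, abs_of_nonneg (hb_nonneg p.1 p.2)]
    have h1 := absSub (u p.1) (u p.2)
    have h2 := absSub (v p.1) (v p.2)
    linarith [mulmul (b p.1 p.2) (|u p.1 - u p.2|) (|u p.1| + |u p.2|) (|v p.1 - v p.2|)
      (|v p.1| + |v p.2|) (hb_nonneg p.1 p.2) (abs_nonneg _) (abs_nonneg _) h1 h2]
  have hf : Summable fun p : V × V => u p.1 * (b p.1 p.2 * (v p.1 - v p.2)) := by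
    refine key _ fun p => ?_
    simp only [abs_mul, abs_of_nonneg (hb_nonneg p.1 p.2)]
    have h2 := absSub (v p.1) (v p.2)
    have h1 : |u p.1| ≤ |u p.1| + |u p.2| := le_add_of_nonneg_right (abs_nonneg _)
    linarith [mulmul (b p.1 p.2) (|u p.1|) (|u p.1| + |u p.2|) (|v p.1 - v p.2|)
      (|v p.1| + |v p.2|) (hb_nonneg p.1 p.2) (abs_nonneg _) (abs_nonneg _) h1 h2]
  have hg : Summable fun p : V × V => b p.1 p.2 * (v p.1 - v p.2) * u p.2 := by
    refine key _ fun p => ?_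
    simp only [abs_mul, abs_of_nonneg (hb_nonneg p.1 p.2)]
    have h2 := absSub (v p.1) (v p.2)
    have h1 : |u p.2| ≤ |u p.1| + |u p.2| := le_add_of_nonneg_left (abs_nonneg _)
    linarith [mulmul (b p.1 p.2) (|u p.2|) (|u p.1| + |u p.2|) (|v p.1 - v p.2|)
      (|v p.1| + |v p.2|) (hb_nonneg p.1 p.2) (abs_nonneg _) (abs_nonneg _) h1 h2]
  have hf' : Summable fun p : V × V => v p.1 * (b p.1 p.2 * (u p.1 - u p.2)) := by
    refine key _ fun p => ?_
    simp only [abs_mul, abs_of_nonneg (hb_nonneg p.1 p.2)]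
    have h1 := absSub (u p.1) (u p.2)
    have h2 : |v p.1| ≤ |v p.1| + |v p.2| := le_add_of_nonneg_right (abs_nonneg _)
    linarith [mulmul (b p.1 p.2) (|u p.1 - u p.2|) (|u p.1| + |u p.2|) (|v p.1|)
      (|v p.1| + |v p.2|) (hb_nonneg p.1 p.2) (abs_nonneg _) (abs_nonneg _) h1 h2]
  have hg' : Summable fun p : V × V => b p.1 p.2 * (u p.1 - u p.2) * v p.2 := by
    refine key _ fun p => ?_
    simp only [abs_mul, abs_of_nonneg (hb_nonneg p.1 p.2)]
    have h1 := absSub (u p.1) (u p.2)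
    have h2 : |v p.2| ≤ |v p.1| + |v p.2| := le_add_of_nonneg_left (abs_nonneg _)
    linarith [mulmul (b p.1 p.2) (|u p.1 - u p.2|) (|u p.1| + |u p.2|) (|v p.2|)
      (|v p.1| + |v p.2|) (hb_nonneg p.1 p.2) (abs_nonneg _) (abs_nonneg _) h1 h2]
  -- pointwise rewriting of the formal Laplacian terms
  have hform_v : ∀ x, u x * formalL b c m v x * m x =
      (∑' y, u x * (b x y * (v x - v y))) + c x * u x * v x := by
    intro x
    have hmx := (hm x).ne'
    rw [tsum_mul_left, formalL]
    field_simp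
  have hform_u : ∀ x, formalL b c m u x * v x * m x =
      v x * (∑' y, b x y * (u x - u y)) + c x * u x * v x := by
    intro x
    have hmx := (hm x).ne'
    rw [formalL]
    field_simp
  -- summable scalar functions
  have hcuv : Summable fun x => |c x * u x * v x| :=
    summable_of_ne_finset_zero (s := S) fun x hx => by simp [hvS x hx]
  have hcuv' : Summable fun x => c x * u x * v x := summable_abs_iff.1 hcuv
  have h2nd : Summable fun x => |formalL b c m u x * v x * m x| :=
    summable_of_ne_finset_zero (s := S) fun x hx => by simp [hvS x hx]
  -- summability of x ↦ ∑'_y u x * (b x y * (v x - v y))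
  have hfx : Summable fun x => ∑' y, u x * (b x y * (v x - v y)) := hf.prod
  have h2ndU : Summable fun x => v x * ∑' y, b x y * (u x - u y) :=
    summable_of_ne_finset_zero (s := S) fun x hx => by simp [hvS x hx]
  have habsf : Summable fun p : V × V => |u p.1 * (b p.1 p.2 * (v p.1 - v p.2))| :=
    summable_abs_iff.2 hf
  have hXf : Summable fun x => ∑' y, |u x * (b x y * (v x - v y))| := habsf.prod
  have h1st : Summable fun x => |u x * formalL b c m v x * m x| := by
    refine Summable.of_nonneg_of_le (fun x => abs_nonneg _) (fun x => ?_) (hXf.add hcuv)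
    rw [hform_v x]
    refine (abs_add_le _ _).trans (add_le_add ?_ le_rfl)
    have := norm_tsum_le_tsum_norm (f := fun y => u x * (b x y * (v x - v y)))
      (by simpa only [Real.norm_eq_abs] using habsf.prod_factor x)
    simpa only [Real.norm_eq_abs] using this
  -- the tsum identities
  have E1 : (∑' x, u x * formalL b c m v x * m x) =
      (∑' p : V × V, u p.1 * (b p.1 p.2 * (v p.1 - v p.2))) + ∑' x, c x * u x * v x := by
    calc (∑' x, u x * formalL b c m v x * m x)
        = ∑' x, ((∑' y, u x * (b x y * (v x - v y))) + c x * u x * v x) :=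
          tsum_congr hform_v
      _ = (∑' x, ∑' y, u x * (b x y * (v x - v y))) + ∑' x, c x * u x * v x :=
          Summable.tsum_add hfx hcuv'
      _ = (∑' p : V × V, u p.1 * (b p.1 p.2 * (v p.1 - v p.2))) + ∑' x, c x * u x * v x := by
          rw [Summable.tsum_prod hf]
  have E2 : (∑' x, formalL b c m u x * v x * m x) =
      (∑' p : V × V, v p.1 * (b p.1 p.2 * (u p.1 - u p.2))) + ∑' x, c x * u x * v x := by
    calc (∑' x, formalL b c m u x * v x * m x)
        = ∑' x, ((v x * ∑' y, b x y * (u x - u y)) + c x * u x * v x) :=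
          tsum_congr hform_u
      _ = (∑' x, v x * ∑' y, b x y * (u x - u y)) + ∑' x, c x * u x * v x :=
          Summable.tsum_add h2ndU hcuv'
      _ = (∑' x, ∑' y, v x * (b x y * (u x - u y))) + ∑' x, c x * u x * v x := by
          congr 1
          exact tsum_congr fun x => (tsum_mul_left).symm
      _ = (∑' p : V × V, v p.1 * (b p.1 p.2 * (u p.1 - u p.2))) + ∑' x, c x * u x * v x := by
          rw [Summable.tsum_prod hf']
  -- antisymmetry trick
  set D : ℝ := ∑' p : V × V, b p.1 p.2 * (u p.1 - u p.2) * (v p.1 - v p.2) with hDdef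
  have swapEq : ∀ h : V × V → ℝ,
      (∑' p : V × V, h p) = ∑' p : V × V, h (p.2, p.1) := by
    intro h
    exact ((Equiv.prodComm V V).tsum_eq h).symm
  have hDf' : D = 2 * ∑' p : V × V, v p.1 * (b p.1 p.2 * (u p.1 - u p.2)) := by
    have e1 : D = (∑' p : V × V, v p.1 * (b p.1 p.2 * (u p.1 - u p.2))) -
        ∑' p : V × V, b p.1 p.2 * (u p.1 - u p.2) * v p.2 := by
      rw [hDdef, ← Summable.tsum_sub hf' hg']
      exact tsum_congr fun p => by ring
    have e2 : (∑' p : V × V, b p.1 p.2 * (u p.1 - u p.2) * v p.2) =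
        - ∑' p : V × V, v p.1 * (b p.1 p.2 * (u p.1 - u p.2)) := by
      rw [swapEq fun p : V × V => b p.1 p.2 * (u p.1 - u p.2) * v p.2]
      rw [← tsum_neg]
      exact tsum_congr fun p => by simp only [hb_symm p.2 p.1]; ring
    rw [e1, e2]; ring
  have hDf : D = 2 * ∑' p : V × V, u p.1 * (b p.1 p.2 * (v p.1 - v p.2)) := by
    have e1 : D = (∑' p : V × V, u p.1 * (b p.1 p.2 * (v p.1 - v p.2))) -
        ∑' p : V × V, b p.1 p.2 * (v p.1 - v p.2) * u p.2 := by
      rw [hDdef, ← Summable.tsum_sub hf hg]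
      exact tsum_congr fun p => by ring
    have e2 : (∑' p : V × V, b p.1 p.2 * (v p.1 - v p.2) * u p.2) =
        - ∑' p : V × V, u p.1 * (b p.1 p.2 * (v p.1 - v p.2)) := by
      rw [swapEq fun p : V × V => b p.1 p.2 * (v p.1 - v p.2) * u p.2]
      rw [← tsum_neg]
      exact tsum_congr fun p => by simp only [hb_symm p.2 p.1]; ring
    rw [e1, e2]; ring
  refine ⟨h1st, h2nd, summable_abs_iff.2 hD, hcuv, ?_, ?_⟩
  · rw [E1, E2]
    have := hDf.symm.trans hDf'
    linarith
  · rw [E1]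
    linarith [hDf]
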